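/- Suppose c_k(w) ≠ 0 for every k ∈ {1,…,K}, and suppose the decision d* ∈ {−1,1}^K defined by d*_k = sign(c_k(w)) minimizes the outcome weighted 0-1 risk, i.e. R01(d*) = min_{d ∈ {−1,1}^K} R01(d). Then every f ∈ {−1,1}^K with RH(f) = min_{d ∈ {−1,1}^K} RH(d) also satisfies R01(f) = min_{d ∈ {−1,1}^K} R01(d). (Fisher consistency of outcome weighted Hamming loss, pointwise form at a fixed covariate value.) -/

import Mathlib

open Finset

noncomputable section

/-- The cube `{-1,1}^K` as a finite set of real vectors. -/
def cube (K : ℕ) : Finset (Fin K → ℝ) :=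
  Finset.univ.image (fun b : Fin K → Bool => fun k => if b k then 1 else -1)

lemma cube_nonempty (K : ℕ) : (cube K).Nonempty :=
  Finset.Nonempty.image Finset.univ_nonempty _

lemma univ_fin_nonempty {K : ℕ} (hK : 1 ≤ K) :
    (Finset.univ : Finset (Fin K)).Nonempty :=
  ⟨⟨0, hK⟩, Finset.mem_univ _⟩

/-- Outcome weighted 0-1 risk at a fixed covariate value:
`R01(d) = Σ_{a ∈ {-1,1}^K} w(a) · 1{a ≠ d}`. -/
def R01 {K : ℕ} (w : (Fin K → ℝ) → ℝ) (d : Fin K → ℝ) : ℝ :=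
  ∑ a ∈ cube K, w a * (if a = d then 0 else 1)

/-- Outcome weighted Hamming risk at a fixed covariate value:
`RH(d) = Σ_{a ∈ {-1,1}^K} w(a) · (1/K) Σ_k 1{a_k ≠ d_k}`. -/
def RH {K : ℕ} (w : (Fin K → ℝ) → ℝ) (d : Fin K → ℝ) : ℝ :=
  ∑ a ∈ cube K, w a * ((1 / (K : ℝ)) * ∑ k : Fin K, if a k = d k then 0 else 1)

/-- Contrast of treatment `k`:
`c_k(w) = Σ_{a : a_k = 1} w(a) - Σ_{a : a_k = -1} w(a)`. -/
def contrast {K : ℕ} (w : (Fin K → ℝ) → ℝ) (k : Fin K) : ℝ :=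
  ∑ a ∈ (cube K).filter (fun a => a k = 1), w a
    - ∑ a ∈ (cube K).filter (fun a => a k = -1), w a

lemma mem_cube_pm {K : ℕ} {d : Fin K → ℝ} (hd : d ∈ cube K) (k : Fin K) :
    d k = 1 ∨ d k = -1 := by
  simp only [cube, Finset.mem_image] at hd
  obtain ⟨b, -, rfl⟩ := hd
  by_cases h : b k <;> simp [h]

lemma contrast_eq {K : ℕ} (w : (Fin K → ℝ) → ℝ) (k : Fin K) :
    contrast w k = ∑ a ∈ cube K, w a * a k := by
  rw [contrast, ← Finset.sum_filter_add_sum_filter_not (cube K) (fun a => a k = 1), sub_eq_add_neg]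
  congr 1
  · apply Finset.sum_congr rfl; intro a ha
    simp only [Finset.mem_filter] at ha; rw [ha.2]; ring
  · have hset : (cube K).filter (fun a => ¬ a k = 1) = (cube K).filter (fun a => a k = -1) := by
      apply Finset.filter_congr; intro a ha
      rcases mem_cube_pm ha k with h | h <;> simp [h] <;> norm_num
    rw [hset, ← Finset.sum_neg_distrib]
    apply Finset.sum_congr rfl; intro a ha
    simp only [Finset.mem_filter] at ha; rw [ha.2]; ring

lemma ind_eq {x y : ℝ} (hx : x = 1 ∨ x = -1) (hy : y = 1 ∨ y = -1) :
    (if x = y then (0:ℝ) else 1) = (1 - x * y) / 2 := by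
  rcases hx with rfl | rfl <;> rcases hy with rfl | rfl <;> norm_num

lemma RH_eq {K : ℕ} (w : (Fin K → ℝ) → ℝ) {d : Fin K → ℝ} (hd : d ∈ cube K) :
    RH w d = (1 / (K : ℝ)) *
      ((K * ∑ a ∈ cube K, w a - ∑ k : Fin K, d k * contrast w k) / 2) := by
  have h1 : RH w d = (1 / (K : ℝ)) * ∑ k : Fin K, ∑ a ∈ cube K, w a * ((1 - a k * d k)/2) := by
    unfold RH
    trans ∑ a ∈ cube K, ∑ k : Fin K, (1/(K:ℝ)) * (w a * ((1 - a k * d k)/2))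
    · apply Finset.sum_congr rfl; intro a ha
      rw [Finset.mul_sum, Finset.mul_sum]
      apply Finset.sum_congr rfl; intro k _
      rw [ind_eq (mem_cube_pm ha k) (mem_cube_pm hd k)]; ring
    · rw [Finset.sum_comm, Finset.mul_sum]
      apply Finset.sum_congr rfl; intro k _
      rw [Finset.mul_sum]
  rw [h1]
  congr 1
  have h2 : ∀ k : Fin K, ∑ a ∈ cube K, w a * ((1 - a k * d k)/2)
      = ((∑ a ∈ cube K, w a) - d k * contrast w k) / 2 := by
    intro k
    rw [contrast_eq, Finset.mul_sum, ← Finset.sum_sub_distrib, Finset.sum_div]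
    apply Finset.sum_congr rfl
    intro a _
    ring
  rw [Finset.sum_congr rfl (fun k _ => h2 k), ← Finset.sum_div,
    Finset.sum_sub_distrib, Finset.sum_const, Finset.card_univ, Fintype.card_fin,
    nsmul_eq_mul]

/-- Fisher consistency of the outcome weighted Hamming loss (pointwise form,
Theorem 1). -/
theorem fisher_consistency_hamming_pointwise
    (K : ℕ) (hK : 1 ≤ K) (w : (Fin K → ℝ) → ℝ)
    (hw : ∀ a ∈ cube K, 0 ≤ w a)
    (hc : ∀ k : Fin K, contrast w k ≠ 0)
    (dstar : Fin K → ℝ) (hdcube : dstar ∈ cube K)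
    (hdstar : ∀ k : Fin K, dstar k = Real.sign (contrast w k))
    (hopt : ∀ d ∈ cube K, R01 w dstar ≤ R01 w d)
    (f : Fin K → ℝ) (hf : f ∈ cube K)
    (hfmin : ∀ d ∈ cube K, RH w f ≤ RH w d) :
    ∀ d ∈ cube K, R01 w f ≤ R01 w d := by
  have hfd : f = dstar := by
    have hK0 : (0:ℝ) < K := by exact_mod_cast hK
    have hRH := hfmin dstar hdcube
    rw [RH_eq w hf, RH_eq w hdcube] at hRH
    have hS : ∑ k : Fin K, dstar k * contrast w k ≤ ∑ k : Fin K, f k * contrast w k := by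
      have h1K : (0:ℝ) < 1 / K := by positivity
      have h2 := (mul_le_mul_iff_right₀ h1K).mp hRH
      linarith
    have hpt : ∀ k ∈ (Finset.univ : Finset (Fin K)),
        f k * contrast w k ≤ dstar k * contrast w k := by
      intro k _
      have hd' : dstar k * contrast w k = |contrast w k| := by
        rw [hdstar k]
        rcases lt_or_gt_of_ne (hc k) with h | h
        · rw [Real.sign_of_neg h, abs_of_neg h]; ring
        · rw [Real.sign_of_pos h, abs_of_pos h]; ring
      rw [hd']
      rcases mem_cube_pm hf k with h | h <;> rw [h]
      · simpa using le_abs_self (contrast w k)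
      · have := neg_abs_le (contrast w k); linarith
    have hsum_le := Finset.sum_le_sum hpt
    have heq : ∑ k : Fin K, f k * contrast w k = ∑ k : Fin K, dstar k * contrast w k :=
      le_antisymm hsum_le hS
    funext k
    have h3 := (Finset.sum_eq_sum_iff_of_le hpt).mp heq k (Finset.mem_univ k)
    exact mul_right_cancel₀ (hc k) h3
  rw [hfd]
  exact hopt
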